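/- Let ϑ₁ be the random Fibonacci substitution a ↦ {ab, ba}, b ↦ {a}. If u is a word such that some word in the set ϑ₁ᵖ(a)·u·{ab} or in ϑ₁ᵖ(a)·u·{ba} is ϑ₁-legal, then both the set ϑ₁ᵖ(a)·ϑ₁(u)·{ab} and the set ϑ₁ᵖ(a)·ϑ₁(u)·ϑ₁(b)·{ba} contain ϑ₁-legal words. -/
import Mathlib


/-- Two-letter alphabet. -/
inductive AB : Type
  | a : AB
  | b : AB
deriving DecidableEq

/-- Extension of a random substitution to words, by setwise concatenation. -/
def substW (θ : AB → Set (List AB)) : List AB → Set (List AB)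
  | [] => {[]}
  | x :: w => {u | ∃ v ∈ θ x, ∃ t ∈ substW θ w, u = v ++ t}

/-- Extension of a random substitution to sets of words. -/
def substS (θ : AB → Set (List AB)) (A : Set (List AB)) : Set (List AB) :=
  ⋃ w ∈ A, substW θ w

/-- Level-`n` inflation words of the letter `x`. -/
def substIter (θ : AB → Set (List AB)) (n : ℕ) (x : AB) : Set (List AB) :=
  (substS θ)^[n] {[x]}

/-- A word is legal if it is a subword of some level-`k` inflation word. -/
def legalW (θ : AB → Set (List AB)) (u : List AB) : Prop :=
  ∃ (k : ℕ) (x : AB), ∃ w ∈ substIter θ k x, u <:+: w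

/-- The random Fibonacci substitution a ↦ {ab, ba}, b ↦ {a}. -/
def randFib : AB → Set (List AB)
  | AB.a => {[AB.a, AB.b], [AB.b, AB.a]}
  | AB.b => {[AB.a]}

namespace RFhelp

def cat (A B : Set (List AB)) : Set (List AB) := {w | ∃ s ∈ A, ∃ t ∈ B, w = s ++ t}

lemma mem_cat {A B : Set (List AB)} {s t : List AB} (hs : s ∈ A) (ht : t ∈ B) :
    s ++ t ∈ cat A B := ⟨s, hs, t, ht, rfl⟩

lemma substW_append (θ : AB → Set (List AB)) (x y : List AB) :
    substW θ (x ++ y) = cat (substW θ x) (substW θ y) := by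
  induction x with
  | nil =>
    ext w
    constructor
    · intro hw
      exact ⟨[], rfl, w, hw, rfl⟩
    · rintro ⟨s, hs, t, ht, rfl⟩
      rw [Set.mem_singleton_iff.1 hs]
      simpa using ht
  | cons z x ih =>
    ext w
    constructor
    · rintro ⟨v, hv, t, ht, rfl⟩
      rw [List.append_eq, ih] at ht
      obtain ⟨s, hs, t', ht', rfl⟩ := ht
      exact ⟨v ++ s, ⟨v, hv, s, hs, rfl⟩, t', ht', by simp⟩
    · rintro ⟨s, ⟨v, hv, s', hs', rfl⟩, t, ht, rfl⟩
      refine ⟨v, hv, s' ++ t, ?_, by simp⟩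
      rw [List.append_eq, ih]
      exact mem_cat hs' ht

lemma mem_substS {θ : AB → Set (List AB)} {A : Set (List AB)} {w' : List AB} :
    w' ∈ substS θ A ↔ ∃ w ∈ A, w' ∈ substW θ w := by
  simp [substS]

lemma substW_nonempty (w : List AB) : (substW randFib w).Nonempty := by
  induction w with
  | nil => exact ⟨[], rfl⟩
  | cons x w ih =>
    obtain ⟨t, ht⟩ := ih
    cases x
    · exact ⟨[AB.a, AB.b] ++ t, ⟨[AB.a, AB.b], Or.inl rfl, t, ht, rfl⟩⟩
    · exact ⟨[AB.a] ++ t, ⟨[AB.a], rfl, t, ht, rfl⟩⟩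

lemma substS_cat (θ : AB → Set (List AB)) (A B : Set (List AB)) :
    substS θ (cat A B) = cat (substS θ A) (substS θ B) := by
  ext w'
  constructor
  · rw [mem_substS]
    rintro ⟨w, ⟨s, hs, t, ht, rfl⟩, hw'⟩
    rw [substW_append] at hw'
    obtain ⟨s', hs', t', ht', rfl⟩ := hw'
    exact mem_cat (mem_substS.2 ⟨s, hs, hs'⟩) (mem_substS.2 ⟨t, ht, ht'⟩)
  · rintro ⟨s', hs', t', ht', rfl⟩
    rw [mem_substS] at hs' ht' ⊢
    obtain ⟨s, hs, hs'⟩ := hs'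
    obtain ⟨t, ht, ht'⟩ := ht'
    exact ⟨s ++ t, mem_cat hs ht, by rw [substW_append]; exact mem_cat hs' ht'⟩

lemma substS_union (θ : AB → Set (List AB)) (A B : Set (List AB)) :
    substS θ (A ∪ B) = substS θ A ∪ substS θ B :=
  Set.biUnion_union A B _

lemma iter_cat (θ : AB → Set (List AB)) (p : ℕ) (A B : Set (List AB)) :
    (substS θ)^[p] (cat A B) = cat ((substS θ)^[p] A) ((substS θ)^[p] B) := by
  induction p generalizing A B with
  | zero => simp
  | succ p ih => simp [Function.iterate_succ_apply, substS_cat, ih]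

lemma iter_union (θ : AB → Set (List AB)) (p : ℕ) (A B : Set (List AB)) :
    (substS θ)^[p] (A ∪ B) = (substS θ)^[p] A ∪ (substS θ)^[p] B := by
  induction p generalizing A B with
  | zero => simp
  | succ p ih => simp [Function.iterate_succ_apply, substS_union, ih]

lemma substIter_succ' (θ : AB → Set (List AB)) (p : ℕ) (x : AB) :
    substIter θ (p+1) x = substS θ (substIter θ p x) := by
  simp [substIter, Function.iterate_succ_apply']

lemma substS_single_a : substS randFib {[AB.a]} = {[AB.a, AB.b], [AB.b, AB.a]} := by
  ext w; rw [mem_substS]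
  constructor
  · rintro ⟨w', hw', hw⟩
    simp only [Set.mem_singleton_iff] at hw'
    subst hw'
    obtain ⟨v, hv, t, ht, rfl⟩ := hw
    simp only [substW, Set.mem_singleton_iff] at ht
    subst ht
    rcases hv with hv | hv <;> subst hv <;> simp
  · rintro (rfl | rfl)
    · exact ⟨[AB.a], rfl, ⟨[AB.a, AB.b], Or.inl rfl, [], rfl, by simp⟩⟩
    · exact ⟨[AB.a], rfl, ⟨[AB.b, AB.a], Or.inr rfl, [], rfl, by simp⟩⟩

lemma substS_single_b : substS randFib {[AB.b]} = {[AB.a]} := by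
  ext w; rw [mem_substS]
  constructor
  · rintro ⟨w', hw', hw⟩
    simp only [Set.mem_singleton_iff] at hw'
    subst hw'
    obtain ⟨v, hv, t, ht, rfl⟩ := hw
    simp only [substW, Set.mem_singleton_iff] at ht
    subst ht
    simp only [randFib, Set.mem_singleton_iff] at hv
    subst hv; simp
  · rintro rfl
    exact ⟨[AB.b], rfl, ⟨[AB.a], rfl, [], rfl, by simp⟩⟩

lemma iterA (p : ℕ) : substIter randFib (p+1) AB.a =
    cat (substIter randFib p AB.a) (substIter randFib p AB.b) ∪
    cat (substIter randFib p AB.b) (substIter randFib p AB.a) := by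
  have h1 : ({[AB.a, AB.b], [AB.b, AB.a]} : Set (List AB)) =
      cat {[AB.a]} {[AB.b]} ∪ cat {[AB.b]} {[AB.a]} := by
    ext w
    constructor
    · rintro (rfl | rfl)
      · exact Or.inl ⟨[AB.a], rfl, [AB.b], rfl, rfl⟩
      · exact Or.inr ⟨[AB.b], rfl, [AB.a], rfl, rfl⟩
    · rintro (⟨s, rfl, t, rfl, rfl⟩ | ⟨s, rfl, t, rfl, rfl⟩)
      · exact Or.inl rfl
      · exact Or.inr rfl
  show (substS randFib)^[p+1] {[AB.a]} = _
  rw [Function.iterate_succ_apply, substS_single_a, h1, iter_union, iter_cat, iter_cat]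
  rfl

lemma iterB (p : ℕ) : substIter randFib (p+1) AB.b = substIter randFib p AB.a := by
  show (substS randFib)^[p+1] {[AB.b]} = _
  rw [Function.iterate_succ_apply, substS_single_b]
  rfl

lemma mem_iter_succ {p : ℕ} {x : AB} {v v₁ : List AB}
    (hv : v ∈ substIter randFib p x) (hv₁ : v₁ ∈ substW randFib v) :
    v₁ ∈ substIter randFib (p+1) x := by
  rw [substIter_succ', mem_substS]
  exact ⟨v, hv, hv₁⟩

/-- Mutual key lemma: suffix structure of one-step inflations. -/
lemma key (p : ℕ) :
    (∀ v ∈ substIter randFib p AB.a, ∃ v'' ∈ substIter randFib p AB.a,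
        ∃ α, α ++ v'' ∈ substW randFib v) ∧
    (∀ v ∈ substIter randFib p AB.a, ∃ β ∈ substIter randFib p AB.b,
        ∃ α, α ++ β ∈ substW randFib v) ∧
    (∀ t ∈ substIter randFib p AB.b, ∃ γ ∈ substIter randFib p AB.a,
        ∃ α, α ++ γ ∈ substW randFib t) := by
  induction p with
  | zero =>
    refine ⟨?_, ?_, ?_⟩
    · rintro v rfl
      exact ⟨[AB.a], rfl, [AB.b],
        ⟨[AB.b, AB.a], Or.inr rfl, [], rfl, by simp⟩⟩
    · rintro v rfl
      exact ⟨[AB.b], rfl, [AB.a],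
        ⟨[AB.a, AB.b], Or.inl rfl, [], rfl, by simp⟩⟩
    · rintro t rfl
      exact ⟨[AB.a], rfl, [],
        ⟨[AB.a], rfl, [], rfl, by simp⟩⟩
  | succ p ih =>
    obtain ⟨hC, hD, hE⟩ := ih
    refine ⟨?_, ?_, ?_⟩
    · -- C (p+1)
      intro v hv
      rw [iterA] at hv
      rcases hv with ⟨s, hs, t, ht, rfl⟩ | ⟨t, ht, s, hs, rfl⟩
      · -- v = s ++ t, s ∈ Iᵖa, t ∈ Iᵖb
        obtain ⟨β, hβ, α, hαβ⟩ := hD s hs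
        obtain ⟨t₁, ht₁⟩ := substW_nonempty t
        have ht₁' : t₁ ∈ substIter randFib p AB.a := by
          have h2 := mem_iter_succ ht ht₁
          rwa [iterB] at h2
        refine ⟨β ++ t₁, ?_, α, ?_⟩
        · rw [iterA]
          exact Or.inr (mem_cat hβ ht₁')
        · rw [substW_append]
          have h3 := mem_cat hαβ ht₁
          rwa [List.append_assoc] at h3
      · -- v = t ++ s
        obtain ⟨t₁, ht₁⟩ := substW_nonempty t
        obtain ⟨s₁, hs₁⟩ := substW_nonempty s
        refine ⟨s₁, mem_iter_succ hs hs₁, t₁, ?_⟩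
        rw [substW_append]
        exact mem_cat ht₁ hs₁
    · -- D (p+1)
      intro v hv
      rw [iterA] at hv
      rcases hv with ⟨s, hs, t, ht, rfl⟩ | ⟨t, ht, s, hs, rfl⟩
      · obtain ⟨s₁, hs₁⟩ := substW_nonempty s
        obtain ⟨γ, hγ, α, hαγ⟩ := hE t ht
        refine ⟨γ, by rw [iterB]; exact hγ, s₁ ++ α, ?_⟩
        rw [substW_append]
        have h3 := mem_cat hs₁ hαγ
        rwa [← List.append_assoc] at h3
      · obtain ⟨t₁, ht₁⟩ := substW_nonempty t
        obtain ⟨v'', hv'', α, hαv⟩ := hC s hs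
        refine ⟨v'', by rw [iterB]; exact hv'', t₁ ++ α, ?_⟩
        rw [substW_append]
        have h3 := mem_cat ht₁ hαv
        rwa [← List.append_assoc] at h3
    · -- E (p+1)
      intro t ht
      rw [iterB] at ht
      obtain ⟨t₁, ht₁⟩ := substW_nonempty t
      exact ⟨t₁, mem_iter_succ ht ht₁, [], by simpa using ht₁⟩

lemma main_case (p k : ℕ) (x₀ : AB) (u v X L R w : List AB)
    (hv : v ∈ substIter randFib p AB.a)
    (hw : w ∈ substIter randFib k x₀)
    (hLR : L ++ (v ++ u ++ X) ++ R = w)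
    (hX : [AB.a, AB.b, AB.a] ∈ substW randFib X) :
    (∃ v ∈ substIter randFib p AB.a, ∃ u' ∈ substW randFib u,
        legalW randFib (v ++ u' ++ [AB.a, AB.b])) ∧
    (∃ v ∈ substIter randFib p AB.a, ∃ u' ∈ substW randFib u,
        ∃ w ∈ randFib AB.b, legalW randFib (v ++ u' ++ w ++ [AB.b, AB.a])) := by
  obtain ⟨v'', hv'', α, hαv⟩ := (key p).1 v hv
  obtain ⟨u', hu'⟩ := substW_nonempty u
  obtain ⟨l', hl'⟩ := substW_nonempty L
  obtain ⟨r', hr'⟩ := substW_nonempty R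
  have hWsub : (l' ++ (((α ++ v'') ++ u') ++ [AB.a, AB.b, AB.a])) ++ r'
      ∈ substW randFib ((L ++ ((v ++ u) ++ X)) ++ R) := by
    rw [substW_append]
    refine mem_cat ?_ hr'
    rw [substW_append]
    refine mem_cat hl' ?_
    rw [substW_append]
    refine mem_cat ?_ hX
    rw [substW_append]
    exact mem_cat hαv hu'
  have hWsub' : (l' ++ (((α ++ v'') ++ u') ++ [AB.a, AB.b, AB.a])) ++ r'
      ∈ substW randFib w := by
    rw [← hLR]; exact hWsub
  have hWiter := mem_iter_succ hw hWsub'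
  constructor
  · exact ⟨v'', hv'', u', hu', k + 1, x₀, _, hWiter,
      l' ++ α, [AB.a] ++ r', by simp⟩
  · exact ⟨v'', hv'', u', hu', [AB.a], rfl, k + 1, x₀, _, hWiter,
      l' ++ α, r', by simp⟩

end RFhelp

/-- Technical lemma for random Fibonacci: if some word in `ϑ₁ᵖ(a)·u·{ab}` or in
`ϑ₁ᵖ(a)·u·{ba}` is legal, then both `ϑ₁ᵖ(a)·ϑ₁(u)·{ab}` and
`ϑ₁ᵖ(a)·ϑ₁(u)·ϑ₁(b)·{ba}` contain legal words. -/
theorem randFib_step (p : ℕ) (u : List AB)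
    (h : (∃ v ∈ substIter randFib p AB.a, legalW randFib (v ++ u ++ [AB.a, AB.b])) ∨
         (∃ v ∈ substIter randFib p AB.a, legalW randFib (v ++ u ++ [AB.b, AB.a]))) :
    (∃ v ∈ substIter randFib p AB.a, ∃ u' ∈ substW randFib u,
        legalW randFib (v ++ u' ++ [AB.a, AB.b])) ∧
    (∃ v ∈ substIter randFib p AB.a, ∃ u' ∈ substW randFib u,
        ∃ w ∈ randFib AB.b, legalW randFib (v ++ u' ++ w ++ [AB.b, AB.a])) := by
  rcases h with ⟨v, hv, k, x₀, w, hw, L, R, hLR⟩ | ⟨v, hv, k, x₀, w, hw, L, R, hLR⟩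
  · refine RFhelp.main_case p k x₀ u v [AB.a, AB.b] L R w hv hw hLR ?_
    exact ⟨[AB.a, AB.b], Or.inl rfl, [AB.a], ⟨[AB.a], rfl, [], rfl, rfl⟩, rfl⟩
  · refine RFhelp.main_case p k x₀ u v [AB.b, AB.a] L R w hv hw hLR ?_
    exact ⟨[AB.a], rfl, [AB.b, AB.a], ⟨[AB.b, AB.a], Or.inr rfl, [], rfl, by simp⟩, rfl⟩
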